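/- Combining the two previous identities: if ℓ = a + 2Bv, ℓ± = a± + 2B± v±, a = a⁺ ∗ a⁻, B = B⁺ ∗ B⁻, and the splicing compatibility holds, then ⟨ℓ,ℓ⟩ = ⟨a,a⟩ − ⟨a⁺,a⁺⟩ − ⟨a⁻,a⁻⟩ + ⟨ℓ⁺,ℓ⁺⟩ + ⟨ℓ⁻,ℓ⁻⟩, where each ⟨·,·⟩ is the pairing twisted by the inverse of the respective framing matrix. -/

import Mathlib

open Finset

/-- The spliced matrix `B = B⁺ ∗ B⁻` over `ℚ`. -/
def spliceMatQ {m n : ℕ} (Bp : Matrix (Fin m ⊕ Unit) (Fin m ⊕ Unit) ℚ)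
    (Bm : Matrix (Unit ⊕ Fin n) (Unit ⊕ Fin n) ℚ) :
    Matrix (Fin m ⊕ Unit ⊕ Fin n) (Fin m ⊕ Unit ⊕ Fin n) ℚ :=
  fun i j =>
    match i, j with
    | Sum.inl i, Sum.inl j => Bp (Sum.inl i) (Sum.inl j)
    | Sum.inl i, Sum.inr (Sum.inl u) => Bp (Sum.inl i) (Sum.inr u)
    | Sum.inl _, Sum.inr (Sum.inr _) => 0
    | Sum.inr (Sum.inl u), Sum.inl j => Bp (Sum.inr u) (Sum.inl j)
    | Sum.inr (Sum.inl u), Sum.inr (Sum.inl u') =>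
        Bp (Sum.inr u) (Sum.inr u') + Bm (Sum.inl u) (Sum.inl u')
    | Sum.inr (Sum.inl u), Sum.inr (Sum.inr j) => Bm (Sum.inl u) (Sum.inr j)
    | Sum.inr (Sum.inr _), Sum.inl _ => 0
    | Sum.inr (Sum.inr i), Sum.inr (Sum.inl u) => Bm (Sum.inr i) (Sum.inl u)
    | Sum.inr (Sum.inr i), Sum.inr (Sum.inr j) => Bm (Sum.inr i) (Sum.inr j)

/-- Splice of vectors, adding the overlapping coordinate: `a⁺ ∗ a⁻`. -/
def spliceVecAdd {Q : Type*} [Add Q] {m n : ℕ}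
    (ap : Fin m ⊕ Unit → Q) (am : Unit ⊕ Fin n → Q) :
    Fin m ⊕ Unit ⊕ Fin n → Q :=
  fun i =>
    match i with
    | Sum.inl i => ap (Sum.inl i)
    | Sum.inr (Sum.inl _) => ap (Sum.inr ()) + am (Sum.inl ())
    | Sum.inr (Sum.inr j) => am (Sum.inr j)

/-- Splice of vectors with agreeing shared coordinate, not doubled. -/
def spliceVecShared {Q : Type*} {m n : ℕ}
    (vp : Fin m ⊕ Unit → Q) (vm : Unit ⊕ Fin n → Q) :
    Fin m ⊕ Unit ⊕ Fin n → Q :=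
  fun i =>
    match i with
    | Sum.inl i => vp (Sum.inl i)
    | Sum.inr (Sum.inl _) => vp (Sum.inr ())
    | Sum.inr (Sum.inr j) => vm (Sum.inr j)

/-- The pairing on `Q^ι` twisted by the inverse of the framing matrix `M`:
`⟨x,y⟩_M := ∑_{i,j} (M⁻¹)_{ij} ⟨x_i, y_j⟩`. -/
noncomputable def twistedPair {Q : Type*} [AddCommGroup Q] [Module ℚ Q]
    (bil : Q →ₗ[ℚ] Q →ₗ[ℚ] ℚ) {ι : Type*} [Fintype ι] [DecidableEq ι]
    (M : Matrix ι ι ℚ) (x y : ι → Q) : ℚ :=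
  ∑ i, ∑ j, M⁻¹ i j * bil (x i) (y j)

/-- Gluing identity for twisted pairings.  With symmetric invertible framing
matrices `B⁺`, `B⁻` and their (invertible) splice `B = B⁺ ∗ B⁻`, spliced
`Spin^c`-representatives `a = a⁺ ∗ a⁻`, a spliced shift vector `v = v⁺ ∗ v⁻`
(with shared coordinate `γ`), and `ℓ = a + 2Bv`, `ℓ± = a± + 2B±v±`, one has
`⟨ℓ,ℓ⟩ = ⟨a,a⟩ − ⟨a⁺,a⁺⟩ − ⟨a⁻,a⁻⟩ + ⟨ℓ⁺,ℓ⁺⟩ + ⟨ℓ⁻,ℓ⁻⟩`, where each pairing is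
twisted by the inverse of the respective framing matrix. -/

lemma twisted_shift {Q : Type*} [AddCommGroup Q] [Module ℚ Q]
    (bil : Q →ₗ[ℚ] Q →ₗ[ℚ] ℚ) (hsymm : ∀ x y, bil x y = bil y x)
    {ι : Type*} [Fintype ι] [DecidableEq ι]
    (M : Matrix ι ι ℚ) (hM : M.IsSymm) (hu : IsUnit M.det)
    (a v ℓ : ι → Q) (hℓ : ∀ i, ℓ i = a i + ∑ j, (2 * M i j) • v j) :
    twistedPair bil M ℓ ℓ = twistedPair bil M a a
      + 4 * ∑ i, bil (a i) (v i) + 4 * ∑ i, ∑ j, M i j * bil (v i) (v j) := by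
  have hinv : ∀ i k, ∑ j, M⁻¹ i j * M j k = if i = k then (1:ℚ) else 0 := by
    intro i k
    rw [← Matrix.mul_apply, Matrix.nonsing_inv_mul M hu, Matrix.one_apply]
  have hinvsymm : ∀ i j, M⁻¹ i j = M⁻¹ j i := by
    intro i j
    conv_lhs => rw [← hM]
    rw [← Matrix.transpose_nonsing_inv]; rfl
  have hMsymm : ∀ i j, M i j = M j i := fun i j => hM.apply j i
  set s : ι → Q := fun i => ∑ j, (2 * M i j) • v j with hs
  have hbs : ∀ (x : Q) j, bil x (s j) = ∑ k, (2 * M j k) * bil x (v k) := by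
    intro x j
    show bil x (∑ k, (2 * M j k) • v k) = _
    rw [map_sum]
    exact Finset.sum_congr rfl fun k _ => by rw [LinearMap.map_smul, smul_eq_mul]
  have hbf : ∀ i (x : Q), bil (s i) x = ∑ k, (2 * M i k) * bil (v k) x := by
    intro i x
    show bil (∑ k, (2 * M i k) • v k) x = _
    rw [map_sum, LinearMap.sum_apply]
    exact Finset.sum_congr rfl fun k _ => by
      rw [LinearMap.map_smul, LinearMap.smul_apply, smul_eq_mul]
  have cross : ∀ b : ι → Q,
      ∑ i, ∑ j, M⁻¹ i j * bil (b i) (s j) = 2 * ∑ i, bil (b i) (v i) := by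
    intro b
    rw [Finset.mul_sum]
    refine Finset.sum_congr rfl fun i _ => ?_
    have e1 : ∀ j, M⁻¹ i j * bil (b i) (s j)
        = ∑ k, (M⁻¹ i j * (2 * M j k)) * bil (b i) (v k) := by
      intro j
      rw [hbs, Finset.mul_sum]
      exact Finset.sum_congr rfl fun k _ => by ring
    simp only [e1]
    rw [Finset.sum_comm]
    have e2 : ∀ k, ∑ j, (M⁻¹ i j * (2 * M j k)) * bil (b i) (v k)
        = (2 * if i = k then (1:ℚ) else 0) * bil (b i) (v k) := by
      intro k
      rw [← Finset.sum_mul]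
      congr 1
      rw [← hinv i k, Finset.mul_sum]
      exact Finset.sum_congr rfl fun j _ => by ring
    simp only [e2, ite_mul, mul_ite, mul_zero, zero_mul, mul_one]
    simp [Finset.sum_ite_eq]
  have quad : ∑ i, ∑ j, M⁻¹ i j * bil (s i) (s j)
      = 4 * ∑ i, ∑ j, M i j * bil (v i) (v j) := by
    have h1 : ∀ i, ∑ j, M⁻¹ i j * bil (s i) (s j) = 2 * bil (s i) (v i) := by
      intro i
      have e1 : ∀ j, M⁻¹ i j * bil (s i) (s j)
          = ∑ k, (M⁻¹ i j * (2 * M j k)) * bil (s i) (v k) := by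
        intro j
        rw [hbs, Finset.mul_sum]
        exact Finset.sum_congr rfl fun k _ => by ring
      simp only [e1]
      rw [Finset.sum_comm]
      have e2 : ∀ k, ∑ j, (M⁻¹ i j * (2 * M j k)) * bil (s i) (v k)
          = (2 * if i = k then (1:ℚ) else 0) * bil (s i) (v k) := by
        intro k
        rw [← Finset.sum_mul]
        congr 1
        rw [← hinv i k, Finset.mul_sum]
        exact Finset.sum_congr rfl fun j _ => by ring
      simp only [e2, ite_mul, mul_ite, mul_zero, zero_mul, mul_one]
      simp [Finset.sum_ite_eq]
    simp only [h1]
    have h2 : ∀ i, bil (s i) (v i) = ∑ k, (2 * M i k) * bil (v k) (v i) :=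
      fun i => hbf i (v i)
    simp only [h2, Finset.mul_sum]
    rw [Finset.sum_comm]
    refine Finset.sum_congr rfl fun i _ => Finset.sum_congr rfl fun j _ => ?_
    rw [hMsymm j i]
    ring
  unfold twistedPair
  simp only [hℓ]
  have expand : ∀ i j, M⁻¹ i j * bil (a i + s i) (a j + s j)
      = M⁻¹ i j * bil (a i) (a j) + M⁻¹ i j * bil (a i) (s j)
        + M⁻¹ i j * bil (s i) (a j) + M⁻¹ i j * bil (s i) (s j) := by
    intro i j
    simp only [map_add, LinearMap.add_apply]
    ring
  rw [Finset.sum_congr rfl fun i _ => Finset.sum_congr rfl fun j _ => expand i j]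
  simp only [Finset.sum_add_distrib]
  have T3 : ∑ i, ∑ j, M⁻¹ i j * bil (s i) (a j)
      = ∑ i, ∑ j, M⁻¹ i j * bil (a i) (s j) := by
    rw [Finset.sum_comm]
    refine Finset.sum_congr rfl fun i _ => Finset.sum_congr rfl fun j _ => ?_
    rw [hinvsymm j i, hsymm (s j) (a i)]
  rw [T3, cross a, quad]
  ring

lemma spliceSymm {m n : ℕ} (Bp : Matrix (Fin m ⊕ Unit) (Fin m ⊕ Unit) ℚ)
    (Bm : Matrix (Unit ⊕ Fin n) (Unit ⊕ Fin n) ℚ)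
    (hBp : Bp.IsSymm) (hBm : Bm.IsSymm) : (spliceMatQ Bp Bm).IsSymm := by
  ext i j
  rw [Matrix.transpose_apply]
  rcases i with i | i | i <;> rcases j with j | j | j <;>
    simp only [spliceMatQ] <;>
    first
      | rfl
      | exact hBp.apply _ _
      | exact hBm.apply _ _
      | rw [hBp.apply, hBm.apply]

theorem gluing_pairing_identity
    {Q : Type*} [AddCommGroup Q] [Module ℚ Q]
    (bil : Q →ₗ[ℚ] Q →ₗ[ℚ] ℚ) (hsymm : ∀ x y, bil x y = bil y x)
    {m n : ℕ}
    (Bp : Matrix (Fin m ⊕ Unit) (Fin m ⊕ Unit) ℚ)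
    (Bm : Matrix (Unit ⊕ Fin n) (Unit ⊕ Fin n) ℚ)
    (hBp : Bp.IsSymm) (hBm : Bm.IsSymm)
    (hup : IsUnit Bp.det) (hum : IsUnit Bm.det)
    (hu : IsUnit (spliceMatQ Bp Bm).det)
    (ap : Fin m ⊕ Unit → Q) (am : Unit ⊕ Fin n → Q)
    (vp : Fin m ⊕ Unit → Q) (vm : Unit ⊕ Fin n → Q)
    (hshare : vp (Sum.inr ()) = vm (Sum.inl ()))
    (a : Fin m ⊕ Unit ⊕ Fin n → Q) (ha : a = spliceVecAdd ap am)
    (v : Fin m ⊕ Unit ⊕ Fin n → Q) (hv : v = spliceVecShared vp vm)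
    (ℓ : Fin m ⊕ Unit ⊕ Fin n → Q)
    (hℓ : ∀ i, ℓ i = a i + ∑ j, (2 * spliceMatQ Bp Bm i j) • v j)
    (ℓp : Fin m ⊕ Unit → Q)
    (hℓp : ∀ i, ℓp i = ap i + ∑ j, (2 * Bp i j) • vp j)
    (ℓm : Unit ⊕ Fin n → Q)
    (hℓm : ∀ i, ℓm i = am i + ∑ j, (2 * Bm i j) • vm j) :
    twistedPair bil (spliceMatQ Bp Bm) ℓ ℓ =
      twistedPair bil (spliceMatQ Bp Bm) a a
        - twistedPair bil Bp ap ap - twistedPair bil Bm am am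
        + twistedPair bil Bp ℓp ℓp + twistedPair bil Bm ℓm ℓm := by
  rw [twisted_shift bil hsymm _ (spliceSymm Bp Bm hBp hBm) hu a v ℓ hℓ,
      twisted_shift bil hsymm Bp hBp hup ap vp ℓp hℓp,
      twisted_shift bil hsymm Bm hBm hum am vm ℓm hℓm]
  have hS : ∑ i, bil (a i) (v i)
      = (∑ i, bil (ap i) (vp i)) + ∑ i, bil (am i) (vm i) := by
    subst ha hv
    simp only [Fintype.sum_sum_type, spliceVecAdd, spliceVecShared, map_add,
      LinearMap.add_apply, Finset.univ_unique, Finset.sum_singleton, hshare]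
    abel
  have hQ : ∑ i, ∑ j, spliceMatQ Bp Bm i j * bil (v i) (v j)
      = (∑ i, ∑ j, Bp i j * bil (vp i) (vp j))
        + ∑ i, ∑ j, Bm i j * bil (vm i) (vm j) := by
    subst hv
    simp only [Fintype.sum_sum_type, spliceMatQ, spliceVecShared,
      Finset.univ_unique, Finset.sum_singleton, zero_mul, add_mul,
      Finset.sum_add_distrib, Finset.sum_const_zero, hshare]
    abel
  rw [hS, hQ]
  ring
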